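/- For all integers q ≥ 2 and n ≥ 1, the family 𝓖_q ∪ 𝓛_q is n-cell implementable under scenario (◦∗) if and only if q ≤ n + 1. -/

import Mathlib

/-- The alphabet 𝔹• = {0, 1, ∗, •}. -/
inductive BB : Type
  | zero
  | one
  | star
  | reject
deriving DecidableEq

instance : Fintype BB :=
  ⟨{BB.zero, BB.one, BB.star, BB.reject}, fun x => by cases x <;> decide⟩

/-- The cell function T : 𝔹• × 𝔹• → 𝔹: T(u,ϑ) = 1 iff u = ∗, or ϑ = ∗,
or u,ϑ ∈ 𝔹 with u = ϑ. -/
def Tcell : BB → BB → Bool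
  | BB.star, _ => true
  | _, BB.star => true
  | BB.zero, BB.zero => true
  | BB.one, BB.one => true
  | _, _ => false

/-- The word-level function T(u,ϑ) = ⋀_{j<n} T(u_j, ϑ_j). -/
def Tword {n : ℕ} (u θ : Fin n → BB) : Bool :=
  decide (∀ j, Tcell (u j) (θ j) = true)

/-- The alphabet 𝔹 = {0,1} ⊆ 𝔹•. -/
def Bcirc : Set BB := {BB.zero, BB.one}

/-- The alphabet 𝔹∗ = {0,1,∗} ⊆ 𝔹•. -/
def Bstar : Set BB := {BB.zero, BB.one, BB.star}

/-- The full alphabet 𝔹•. -/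
def Bdot : Set BB := Set.univ

/-- A family Φ of functions {0,…,q−1} → 𝔹 is n-cell implementable under
scenario (A,B) if there are mappings u : {0,…,q−1} → A^n and ϑ : Φ → B^n
with f(x) = T(u(x), ϑ(f)) for all f ∈ Φ and x. -/
def Implementable (A B : Set BB) (n q : ℕ) (Φ : Set (Fin q → Bool)) : Prop :=
  ∃ u : Fin q → Fin n → BB, ∃ θ : (Fin q → Bool) → Fin n → BB,
    (∀ x j, u x j ∈ A) ∧ (∀ f ∈ Φ, ∀ j, θ f j ∈ B) ∧
    (∀ f ∈ Φ, ∀ x, f x = Tword (u x) (θ f))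

/-- The family 𝓔_q = { x ↦ [x = t] : t ∈ [q⟩ }. -/
def Eset (q : ℕ) : Set (Fin q → Bool) :=
  { f | ∃ t : Fin q, f = fun x => decide (x = t) }

/-- The family 𝓝_q = { x ↦ [x ≠ t] : t ∈ [q⟩ }. -/
def Nset (q : ℕ) : Set (Fin q → Bool) :=
  { f | ∃ t : Fin q, f = fun x => decide (x ≠ t) }

/-- The family 𝓖_q = { x ↦ [x ≥ t] : t ∈ [q⟩ }. -/
def Gset (q : ℕ) : Set (Fin q → Bool) :=
  { f | ∃ t : Fin q, f = fun x => decide (t ≤ x) }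

/-- The family 𝓛_q = { x ↦ [x ≤ t] : t ∈ [q⟩ }. -/
def Lset (q : ℕ) : Set (Fin q → Bool) :=
  { f | ∃ t : Fin q, f = fun x => decide (x ≤ t) }

lemma Tword_true_iff {n : ℕ} (u θ : Fin n → BB) :
    Tword u θ = true ↔ ∀ j, Tcell (u j) (θ j) = true := by
  simp [Tword]

lemma Tcell_eq_of_circ {a b : BB} (ha : a ∈ Bcirc) (hb : b ∈ Bcirc)
    (h : Tcell a b = true) : a = b := by
  simp only [Bcirc, Set.mem_insert_iff, Set.mem_singleton_iff] at ha hb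
  rcases ha with rfl | rfl <;> rcases hb with rfl | rfl <;> simp_all [Tcell]

theorem GLset_implementable_circStar (q n : ℕ) (hq : 2 ≤ q) (hn : 1 ≤ n) :
    Implementable Bcirc Bstar n q (Gset q ∪ Lset q) ↔ q ≤ n + 1 := by
  constructor
  · rintro ⟨u, θ, hu, hθ, hT⟩
    by_contra hc
    push_neg at hc
    have hg : ∀ t : Fin q, (fun x => decide (t ≤ x)) ∈ Gset q ∪ Lset q :=
      fun t => Or.inl ⟨t, rfl⟩
    have key : ∀ i : Fin (n+1), ∃ j : Fin n,
        Tcell (u ⟨i, by omega⟩ j)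
          (θ (fun x => decide ((⟨(i:ℕ)+1, by omega⟩ : Fin q) ≤ x)) j) = false := by
      intro i
      set t : Fin q := ⟨(i:ℕ)+1, by omega⟩ with ht
      have h1 := hT _ (hg t) ⟨i, by omega⟩
      have hd : decide (t ≤ (⟨i, by omega⟩ : Fin q)) = false := by
        simp [Fin.le_def, ht]
      rw [hd] at h1
      have h2 : ¬ (∀ j, Tcell (u ⟨i, by omega⟩ j) (θ (fun x => decide (t ≤ x)) j) = true) := by
        intro hall
        rw [← Tword_true_iff] at hall
        rw [hall] at h1; exact absurd h1 (by simp)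
      push_neg at h2
      obtain ⟨j, hj⟩ := h2
      exact ⟨j, by simpa using hj⟩
    choose J hJ using key
    have match_ : ∀ i : Fin (n+1), ∀ x : Fin q, (i:ℕ)+1 ≤ (x:ℕ) →
        ∀ j, Tcell (u x j)
          (θ (fun y => decide ((⟨(i:ℕ)+1, by omega⟩ : Fin q) ≤ y)) j) = true := by
      intro i x hx j
      set t : Fin q := ⟨(i:ℕ)+1, by omega⟩
      have h1 := hT _ (hg t) x
      have hd : decide (t ≤ x) = true := by
        simp only [Fin.le_def, decide_eq_true_eq]; exact hx
      rw [hd] at h1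
      exact (Tword_true_iff _ _).mp h1.symm j
    have hinj : Function.Injective J := by
      intro s t hst
      by_contra hne
      wlog h : (s:ℕ) < (t:ℕ) generalizing s t
      · exact this hst.symm (Ne.symm hne) (by omega)
      set j := J s with hjdef
      have hval : ∀ x : Fin q, (s:ℕ)+1 ≤ (x:ℕ) →
          u x j = θ (fun y => decide ((⟨(s:ℕ)+1, by omega⟩ : Fin q) ≤ y)) j := by
        intro x hx
        apply Tcell_eq_of_circ (hu x j) _ (match_ s x hx j)
        have hcell := hJ s
        have hstar : θ (fun y => decide ((⟨(s:ℕ)+1, by omega⟩ : Fin q) ≤ y)) j ≠ BB.star := by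
          intro hs
          rw [hs] at hcell
          cases hh : u ⟨s, by omega⟩ j <;> simp_all [Tcell]
        have hb := hθ _ (hg ⟨(s:ℕ)+1, by omega⟩) j
        simp only [Bstar, Set.mem_insert_iff, Set.mem_singleton_iff] at hb
        simp only [Bcirc, Set.mem_insert_iff, Set.mem_singleton_iff]
        tauto
      have e1 : u ⟨t, by omega⟩ j = u ⟨(t:ℕ)+1, by omega⟩ j := by
        rw [hval ⟨t, by omega⟩ (by show (s:ℕ)+1 ≤ (t:ℕ); omega), hval ⟨(t:ℕ)+1, by omega⟩ (by show (s:ℕ)+1 ≤ (t:ℕ)+1; omega)]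
      have c1 := hJ t
      have c2 := match_ t ⟨(t:ℕ)+1, by omega⟩ (le_refl _) (J t)
      rw [← hst] at c1 c2
      rw [e1, c2] at c1
      exact absurd c1 (by simp)
    have hcard := Fintype.card_le_of_injective J hinj
    simp at hcard
  · intro hqn
    classical
    refine ⟨fun x j => if (j:ℕ) < (x:ℕ) then BB.one else BB.zero,
      fun f => if h : f ∈ Gset q then
          (fun j => if (j:ℕ)+1 = (h.choose:ℕ) then BB.one else BB.star)
        else if h' : f ∈ Lset q then
          (fun j => if (j:ℕ) = (h'.choose:ℕ) then BB.zero else BB.star)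
        else fun _ => BB.star, ?_, ?_, ?_⟩
    · intro x j
      by_cases h : (j:ℕ) < (x:ℕ) <;> simp [h, Bcirc]
    · intro f hf j
      by_cases h : f ∈ Gset q
      · beta_reduce
        rw [dif_pos h]
        by_cases hj : (j:ℕ)+1 = (h.choose:ℕ) <;> simp [hj, Bstar]
      · rcases hf with hf | hf
        · exact absurd hf h
        beta_reduce
        rw [dif_neg h, dif_pos hf]
        by_cases hj : (j:ℕ) = (hf.choose:ℕ) <;> simp [hj, Bstar]
    · intro f hf x
      by_cases h : f ∈ Gset q
      · beta_reduce
        rw [dif_pos h]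
        obtain ht := h.choose_spec
        set t := h.choose with htdef
        rw [ht]
        simp only [Tword, decide_eq_decide, Fin.le_def]
        constructor
        · intro hle j
          by_cases hj : (j:ℕ)+1 = (t:ℕ)
          · rw [if_pos hj, if_pos (show (j:ℕ) < (x:ℕ) by omega)]; rfl
          · rw [if_neg hj]; by_cases hx : (j:ℕ) < (x:ℕ) <;> simp [hx, Tcell]
        · intro hall
          by_contra hxt
          push_neg at hxt
          have ht1 : 1 ≤ (t:ℕ) := by omega
          have hlt : (t:ℕ) - 1 < n := by omega
          have hh := hall ⟨(t:ℕ)-1, hlt⟩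
          have e1 : ((⟨(t:ℕ)-1, hlt⟩ : Fin n) : ℕ) + 1 = (t:ℕ) := by simp; omega
          have e2 : ¬ (((⟨(t:ℕ)-1, hlt⟩ : Fin n) : ℕ) < (x:ℕ)) := by simp; omega
          rw [if_pos e1, if_neg e2] at hh
          exact absurd hh (by simp [Tcell])
      · rcases hf with hf | hf
        · exact absurd hf h
        beta_reduce
        rw [dif_neg h, dif_pos hf]
        obtain ht := hf.choose_spec
        set t := hf.choose with htdef
        rw [ht]
        simp only [Tword, decide_eq_decide, Fin.le_def]
        constructor
        · intro hle j
          by_cases hj : (j:ℕ) = (t:ℕ)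
          · rw [if_pos hj, if_neg (show ¬ (j:ℕ) < (x:ℕ) by omega)]; rfl
          · rw [if_neg hj]; by_cases hx : (j:ℕ) < (x:ℕ) <;> simp [hx, Tcell]
        · intro hall
          by_contra hxt
          push_neg at hxt
          have hlt : (t:ℕ) < n := by
            have := x.isLt; omega
          have hh := hall ⟨(t:ℕ), hlt⟩
          have e2 : ((⟨(t:ℕ), hlt⟩ : Fin n) : ℕ) < (x:ℕ) := by simp; omega
          rw [if_pos rfl, if_pos e2] at hh
          exact absurd hh (by simp [Tcell])
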